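/- Let T be a general pseudo-homogeneous t-norm. If lim_{x↘x₀} T(x,x) = x₀ for some x₀∈(0,1), then T(x,x)=x for all x∈(x₀,1). -/
import Mathlib


open Set Filter Topology

def IsTnorm (T : ℝ → ℝ → ℝ) : Prop :=
  (∀ x ∈ Set.Icc (0:ℝ) 1, ∀ y ∈ Set.Icc (0:ℝ) 1, T x y ∈ Set.Icc (0:ℝ) 1) ∧
  (∀ x ∈ Set.Icc (0:ℝ) 1, ∀ y ∈ Set.Icc (0:ℝ) 1, T x y = T y x) ∧
  (∀ x ∈ Set.Icc (0:ℝ) 1, ∀ y ∈ Set.Icc (0:ℝ) 1, ∀ z ∈ Set.Icc (0:ℝ) 1,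
      T x (T y z) = T (T x y) z) ∧
  (∀ x ∈ Set.Icc (0:ℝ) 1, ∀ y ∈ Set.Icc (0:ℝ) 1, ∀ z ∈ Set.Icc (0:ℝ) 1,
      y ≤ z → T x y ≤ T x z) ∧
  (∀ x ∈ Set.Icc (0:ℝ) 1, T x 1 = x)

def IsGPH (T F : ℝ → ℝ → ℝ) : Prop :=
  ∀ lam ∈ Set.Icc (0:ℝ) 1, ∀ x ∈ Set.Icc (0:ℝ) 1, ∀ y ∈ Set.Icc (0:ℝ) 1,
    T (lam * x) (lam * y) = F lam (T x y)

noncomputable def TD : ℝ → ℝ → ℝ := fun x y => if max x y = 1 then min x y else 0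

theorem right_limit_idempotent (T : ℝ → ℝ → ℝ) (hT : IsTnorm T)
    (h : ∃ F : ℝ → ℝ → ℝ, IsGPH T F) (x₀ : ℝ) (hx₀ : x₀ ∈ Set.Ioo (0:ℝ) 1)
    (hlim : Tendsto (fun x => T x x) (𝓝[>] x₀) (𝓝 x₀)) :
    ∀ x ∈ Set.Ioo x₀ 1, T x x = x := by
  obtain ⟨F, hF⟩ := h
  obtain ⟨hclosed, hcomm, _hassoc, hmono, hunit⟩ := hT
  obtain ⟨hx₀0, hx₀1⟩ := hx₀
  intro x hx
  obtain ⟨hxl, hxr⟩ := hx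
  have hx01 : x ∈ Set.Icc (0:ℝ) 1 := ⟨le_of_lt (hx₀0.trans hxl), le_of_lt hxr⟩
  set c := T x x with hc
  have hc01 : c ∈ Set.Icc (0:ℝ) 1 := hclosed x hx01 x hx01
  have hcx : c ≤ x := by
    have := hmono x hx01 x hx01 1 ⟨zero_le_one, le_refl 1⟩ hx01.2
    rwa [hunit x hx01] at this
  rcases eq_or_lt_of_le hcx with heq | hlt
  · exact heq
  -- c < x, derive contradiction
  exfalso
  have hxpos : 0 < x := hx₀0.trans hxl
  set r := x₀ / x with hr
  have hrpos : 0 < r := div_pos hx₀0 hxpos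
  have hr1 : r < 1 := (div_lt_one hxpos).mpr hxl
  have hrc : r * c < x₀ := by
    calc r * c < r * x := by exact mul_lt_mul_of_pos_left hlt hrpos
    _ = x₀ := div_mul_cancel₀ x₀ (ne_of_gt hxpos)
  -- choose lam ∈ (r, 1) with lam * c < x₀
  have hlam : ∃ lam : ℝ, r < lam ∧ lam < 1 ∧ lam * c < x₀ := by
    rcases eq_or_lt_of_le hc01.1 with hc0 | hcpos
    · obtain ⟨lam, h1, h2⟩ := exists_between hr1
      exact ⟨lam, h1, h2, by rw [← hc0, mul_zero]; exact hx₀0⟩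
    · have hrx : r < x₀ / c := (lt_div_iff₀ hcpos).mpr hrc
      obtain ⟨lam, h1, h2⟩ := exists_between (lt_min hr1 hrx)
      refine ⟨lam, h1, (lt_min_iff.mp h2).1, ?_⟩
      have := (lt_min_iff.mp h2).2
      calc lam * c < (x₀ / c) * c := mul_lt_mul_of_pos_right this hcpos
      _ = x₀ := div_mul_cancel₀ x₀ (ne_of_gt hcpos)
  obtain ⟨lam, hrlam, hlam1, hlamc⟩ := hlam
  have hlampos : 0 < lam := hrpos.trans hrlam
  have hlam01 : lam ∈ Set.Icc (0:ℝ) 1 := ⟨le_of_lt hlampos, le_of_lt hlam1⟩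
  have hx₀lamx : x₀ < lam * x := by
    calc x₀ = r * x := (div_mul_cancel₀ x₀ (ne_of_gt hxpos)).symm
    _ < lam * x := mul_lt_mul_of_pos_right hrlam hxpos
  have hlamx1 : lam * x < 1 := by
    calc lam * x < 1 * x := mul_lt_mul_of_pos_right hlam1 hxpos
    _ = x := one_mul x
    _ < 1 := hxr
  have hlamx01 : lam * x ∈ Set.Icc (0:ℝ) 1 :=
    ⟨le_of_lt (hx₀0.trans hx₀lamx), le_of_lt hlamx1⟩
  have hlamc01 : lam * c ∈ Set.Icc (0:ℝ) 1 :=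
    ⟨mul_nonneg (le_of_lt hlampos) hc01.1, le_of_lt (hlamc.trans hx₀1)⟩
  -- T (lam*x) (lam*x) ≤ lam * c
  have key : T (lam * x) (lam * x) ≤ lam * c := by
    have e1 : T (lam * x) (lam * x) = F lam c := hF lam hlam01 x hx01 x hx01
    have e2 : T (lam * c) (lam * 1) = F lam (T c 1) :=
      hF lam hlam01 c hc01 1 ⟨zero_le_one, le_refl 1⟩
    rw [hunit c hc01, mul_one] at e2
    rw [e1, ← e2]
    have := hmono (lam * c) hlamc01 lam hlam01 1 ⟨zero_le_one, le_refl 1⟩ hlam01.2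
    rwa [hunit (lam * c) hlamc01] at this
  -- get y with x₀ < y < lam*x and lam*c < T y y
  have h1 : ∀ᶠ y in 𝓝[>] x₀, lam * c < T y y :=
    hlim.eventually (eventually_gt_nhds hlamc)
  have h2 : ∀ᶠ y in 𝓝[>] x₀, y < lam * x :=
    eventually_nhdsWithin_of_eventually_nhds (eventually_lt_nhds hx₀lamx)
  have h3 : ∀ᶠ y in 𝓝[>] x₀, x₀ < y := eventually_mem_nhdsWithin
  obtain ⟨y, ⟨⟨hy1, hy2⟩, hy3⟩⟩ := ((h1.and h2).and h3).exists
  have hy01 : y ∈ Set.Icc (0:ℝ) 1 :=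
    ⟨le_of_lt (hx₀0.trans hy3), le_of_lt (hy2.trans hlamx1)⟩
  have chain : T y y ≤ T (lam * x) (lam * x) := by
    have s1 : T y y ≤ T y (lam * x) := hmono y hy01 y hy01 (lam * x) hlamx01 (le_of_lt hy2)
    have s2 : T y (lam * x) = T (lam * x) y := hcomm y hy01 (lam * x) hlamx01
    have s3 : T (lam * x) y ≤ T (lam * x) (lam * x) :=
      hmono (lam * x) hlamx01 y hy01 (lam * x) hlamx01 (le_of_lt hy2)
    linarith [s1, s3, s2.le, s2.ge]
  linarith [key, chain, hy1]
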